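/- Let V_1, …, V_{n+1} be exchangeable real-valued random variables, i.e., for every permutation σ of {1, …, n+1}, (V_{σ(1)}, …, V_{σ(n+1)}) has the same joint distribution as (V_1, …, V_{n+1}). For α ∈ (0,1), let k := ⌈(1 − α)(n + 1)⌉ and define η̂ to be the k-th smallest value among V_1, …, V_n if k ≤ n, and η̂ := +∞ otherwise. Then P(V_{n+1} ≤ η̂) ≥ 1 − α. -/

import Mathlib

open MeasureTheory ProbabilityTheory
open scoped ENNReal

open Finset

lemma aux_sInf {m : ℕ} [NeZero m] (w : Fin m → ℝ) {k : ℕ} (hk1 : 1 ≤ k) (hkm : k ≤ m) :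
    sInf {t : ℝ | k ≤ (univ.filter (fun i : Fin m => w i ≤ t)).card} ∈
      {t : ℝ | k ≤ (univ.filter (fun i : Fin m => w i ≤ t)).card} ∧
    (univ.filter (fun i : Fin m =>
      w i < sInf {t : ℝ | k ≤ (univ.filter (fun i : Fin m => w i ≤ t)).card})).card < k := by
  set S := {t : ℝ | k ≤ (univ.filter (fun i : Fin m => w i ≤ t)).card} with hS
  have huniv : (univ : Finset (Fin m)).Nonempty := univ_nonempty
  have hSne : S.Nonempty := by
    refine ⟨univ.sup' huniv w, ?_⟩
    have : univ.filter (fun i : Fin m => w i ≤ univ.sup' huniv w) = univ := by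
      refine filter_true_of_mem fun i _ => le_sup' w (mem_univ i)
    simp only [hS, Set.mem_setOf_eq, this, card_univ, Fintype.card_fin]
    exact hkm
  have hSbdd : BddBelow S := by
    refine ⟨univ.inf' huniv w, fun t ht => ?_⟩
    have hcard : 0 < (univ.filter (fun i : Fin m => w i ≤ t)).card := lt_of_lt_of_le hk1 ht
    obtain ⟨i, hi⟩ := card_pos.mp hcard
    rw [mem_filter] at hi
    exact le_trans (inf'_le w (mem_univ i)) hi.2
  have hSclosed : IsClosed S := by
    have : S = ⋃ s ∈ (Finset.powersetCard k (univ : Finset (Fin m)) : Set (Finset (Fin m))),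
        ⋂ i ∈ (s : Set (Fin m)), Set.Ici (w i) := by
      ext t
      simp only [hS, Set.mem_setOf_eq, Set.mem_iUnion, Set.mem_iInter, Set.mem_Ici,
        Finset.mem_coe, Finset.mem_powersetCard]
      constructor
      · intro h
        obtain ⟨s, hs, hcard⟩ := Finset.exists_subset_card_eq h
        exact ⟨s, ⟨hs.trans (filter_subset _ _), hcard⟩,
          fun i hi => (mem_filter.mp (hs hi)).2⟩
      · rintro ⟨s, ⟨-, hcard⟩, h⟩
        calc k = s.card := hcard.symm
          _ ≤ _ := card_le_card fun i hi => mem_filter.mpr ⟨mem_univ i, h i hi⟩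
    rw [this]
    exact (Finset.powersetCard k univ).finite_toSet.isClosed_biUnion
      fun s _ => isClosed_biInter fun i _ => isClosed_Ici
  have hmem : sInf S ∈ S := hSclosed.csInf_mem hSne hSbdd
  refine ⟨hmem, ?_⟩
  by_cases hF : (univ.filter (fun i : Fin m => w i < sInf S)).Nonempty
  · set F := univ.filter (fun i : Fin m => w i < sInf S) with hFdef
    set t := F.sup' hF w with ht
    have htlt : t < sInf S := by
      obtain ⟨i, hi, hwi⟩ := exists_mem_eq_sup' hF w
      rw [ht, hwi]
      exact (mem_filter.mp hi).2
    have htnot : t ∉ S := fun h => absurd (csInf_le hSbdd h) (not_le.mpr htlt)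
    have hcard : (univ.filter (fun i : Fin m => w i ≤ t)).card < k := by
      simpa [hS] using htnot
    refine lt_of_le_of_lt (card_le_card ?_) hcard
    intro i hi
    have h2 := le_sup' w hi
    rw [mem_filter] at hi ⊢
    exact ⟨hi.1, h2⟩
  · rw [not_nonempty_iff_eq_empty] at hF
    rw [hF]
    simpa using (show 0 < k from hk1)

-- count over Fin (n+1) vs Fin n when last index never satisfies
lemma count_castSucc {n : ℕ} (p : Fin (n + 1) → Prop) [DecidablePred p]
    (hlast : ¬ p (Fin.last n)) :
    (univ.filter (fun i : Fin (n + 1) => p i)).card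
      = (univ.filter (fun i : Fin n => p i.castSucc)).card := by
  rw [card_filter, card_filter, Fin.sum_univ_castSucc]
  simp [hlast]

lemma char_lemma {n k : ℕ} (hk1 : 1 ≤ k) (hkn : k ≤ n) (w : Fin (n + 1) → ℝ) :
    (w (Fin.last n) ≤
        sInf {t : ℝ | k ≤ (univ.filter (fun i : Fin n => w i.castSucc ≤ t)).card})
      ↔ (univ.filter (fun i : Fin (n + 1) => w i < w (Fin.last n))).card < k := by
  have hn : NeZero n := ⟨by omega⟩
  obtain ⟨hmem, hlt⟩ := aux_sInf (fun i : Fin n => w i.castSucc) hk1 hkn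
  set η := sInf {t : ℝ | k ≤ (univ.filter (fun i : Fin n => w i.castSucc ≤ t)).card} with hη
  have hconv : (univ.filter (fun i : Fin (n + 1) => w i < w (Fin.last n))).card
      = (univ.filter (fun i : Fin n => w i.castSucc < w (Fin.last n))).card :=
    count_castSucc _ (lt_irrefl _)
  rw [hconv]
  constructor
  · intro h
    refine lt_of_le_of_lt (card_le_card ?_) hlt
    intro i hi
    rw [mem_filter] at hi ⊢
    exact ⟨hi.1, lt_of_lt_of_le hi.2 h⟩
  · intro h
    by_contra hcon
    push_neg at hcon
    have hsub : (univ.filter (fun i : Fin n => w i.castSucc ≤ η))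
        ⊆ (univ.filter (fun i : Fin n => w i.castSucc < w (Fin.last n))) := by
      intro i hi
      rw [mem_filter] at hi ⊢
      exact ⟨hi.1, lt_of_le_of_lt hi.2 hcon⟩
    exact absurd (hmem.trans (card_le_card hsub)) (not_le.mpr h)

lemma comb_lemma {m : ℕ} [NeZero m] {k : ℕ} (hk1 : 1 ≤ k) (hkm : k ≤ m) (w : Fin m → ℝ) :
    k ≤ (univ.filter (fun j : Fin m =>
      (univ.filter (fun i : Fin m => w i < w j)).card < k)).card := by
  obtain ⟨hmem, hlt⟩ := aux_sInf w hk1 hkm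
  set η := sInf {t : ℝ | k ≤ (univ.filter (fun i : Fin m => w i ≤ t)).card} with hη
  refine le_trans hmem (card_le_card ?_)
  intro j hj
  rw [mem_filter] at hj ⊢
  refine ⟨hj.1, lt_of_le_of_lt (card_le_card ?_) hlt⟩
  intro i hi
  rw [mem_filter] at hi ⊢
  exact ⟨hi.1, lt_of_lt_of_le hi.2 hj.2⟩

/-- marginal coverage of split conformal prediction. If `V 0, …, V n`
(i.e. `V_1, …, V_{n+1}`) are exchangeable, `k = ⌈(1 − α)(n + 1)⌉` and `η̂` is the k-th
smallest of the first `n` values (`+∞`, i.e. the event is everything, if `k > n`), then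
`P(V_{n+1} ≤ η̂) ≥ 1 − α`. -/
theorem stmt_4
    {Ω : Type*} [mΩ : MeasurableSpace Ω]
    (P : Measure Ω) [IsProbabilityMeasure P]
    (n : ℕ) (V : Fin (n + 1) → Ω → ℝ) (hV : ∀ i, Measurable (V i))
    -- exchangeability: permuting the coordinates does not change the joint law
    (hexch : ∀ σ : Equiv.Perm (Fin (n + 1)),
      Measure.map (fun ω => fun i => V (σ i) ω) P = Measure.map (fun ω => fun i => V i ω) P)
    (α : ℝ) (hα : α ∈ Set.Ioo (0 : ℝ) 1)
    (k : ℕ) (hk : k = ⌈(1 - α) * (n + 1 : ℝ)⌉₊)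
    -- η̂ = k-th smallest value among V_1, …, V_n (when k ≤ n)
    (ηhat : Ω → ℝ)
    (hηhat : ηhat = fun ω =>
      sInf {t : ℝ | k ≤ (Finset.univ.filter (fun i : Fin n => V i.castSucc ω ≤ t)).card}) :
    1 - α ≤ (P (if k ≤ n then {ω | V (Fin.last n) ω ≤ ηhat ω} else Set.univ)).toReal := by
  obtain ⟨hα0, hα1⟩ := hα
  by_cases hkn : k ≤ n
  swap
  · rw [if_neg hkn, measure_univ]
    norm_num; linarith
  rw [if_pos hkn]
  -- basic facts about k
  have hk1 : 1 ≤ k := by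
    have hpos : (0 : ℝ) < (1 - α) * (n + 1 : ℝ) := by nlinarith
    rw [hk]
    exact Nat.ceil_pos.mpr hpos
  have hklb : (1 - α) * (n + 1 : ℝ) ≤ (k : ℝ) := hk ▸ Nat.le_ceil _
  -- setup
  set T : Ω → (Fin (n + 1) → ℝ) := fun ω i => V i ω with hT
  have hTm : Measurable T := measurable_pi_lambda _ hV
  set μ : Measure (Fin (n + 1) → ℝ) := P.map T with hμ
  haveI : IsProbabilityMeasure μ := Measure.isProbabilityMeasure_map hTm.aemeasurable
  set B : Fin (n + 1) → Set (Fin (n + 1) → ℝ) := fun j =>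
    {v | (Finset.univ.filter (fun i : Fin (n + 1) => v i < v j)).card < k} with hB
  have hcm : ∀ j, Measurable (fun v : Fin (n + 1) → ℝ =>
      (Finset.univ.filter (fun i : Fin (n + 1) => v i < v j)).card) := by
    intro j
    have : (fun v : Fin (n + 1) → ℝ =>
        (Finset.univ.filter (fun i : Fin (n + 1) => v i < v j)).card)
        = fun v => ∑ i : Fin (n + 1), if v i < v j then 1 else 0 := by
      funext v; exact Finset.card_filter _ _
    rw [this]
    exact Finset.measurable_sum _ fun i _ =>
      Measurable.ite (measurableSet_lt (measurable_pi_apply i) (measurable_pi_apply j))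
        measurable_const measurable_const
  have hBm : ∀ j, MeasurableSet (B j) := fun j => (hcm j) measurableSet_Iio
  -- exchangeability: all B j have the same measure
  have hsame : ∀ j, μ (B j) = μ (B (Fin.last n)) := by
    intro j
    set σ := Equiv.swap j (Fin.last n) with hσ
    set pm : (Fin (n + 1) → ℝ) → (Fin (n + 1) → ℝ) := fun v => v ∘ σ with hpm
    have hpmm : Measurable pm := measurable_pi_lambda _ fun i => measurable_pi_apply (σ i)
    have hmap : μ.map pm = μ := by
      rw [hμ, Measure.map_map hpmm hTm]
      have : pm ∘ T = fun ω => fun i => V (σ i) ω := rfl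
      rw [this, hexch σ]
    have hpre : pm ⁻¹' (B (Fin.last n)) = B j := by
      ext v
      have hj : σ (Fin.last n) = j := Equiv.swap_apply_right _ _
      have h2 : (Finset.univ.filter (fun i : Fin (n + 1) => v (σ i) < v j)).card
          = (Finset.univ.filter (fun i : Fin (n + 1) => v i < v j)).card := by
        rw [Finset.card_filter, Finset.card_filter]
        exact Equiv.sum_comp σ (fun i => if v i < v j then 1 else 0)
      simp only [hB, Set.mem_preimage, Set.mem_setOf_eq, hpm, Function.comp_apply, hj, h2]
    calc μ (B j) = μ (pm ⁻¹' (B (Fin.last n))) := by rw [hpre]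
      _ = (μ.map pm) (B (Fin.last n)) := (Measure.map_apply hpmm (hBm _)).symm
      _ = μ (B (Fin.last n)) := by rw [hmap]
  -- pointwise: at least k of the sets B j contain any v
  have hpt : ∀ v : Fin (n + 1) → ℝ,
      (k : ℝ≥0∞) ≤ ∑ j : Fin (n + 1), (B j).indicator (fun _ => (1 : ℝ≥0∞)) v := by
    intro v
    have hcomb := comb_lemma (m := n + 1) hk1 (by omega) v
    have : ∑ j : Fin (n + 1), (B j).indicator (fun _ => (1 : ℝ≥0∞)) v
        = ((Finset.univ.filter (fun j : Fin (n + 1) =>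
            (Finset.univ.filter (fun i : Fin (n + 1) => v i < v j)).card < k)).card : ℝ≥0∞) := by
      rw [Finset.card_filter]
      push_cast
      refine Finset.sum_congr rfl fun j _ => ?_
      by_cases hjv : (Finset.univ.filter (fun i : Fin (n + 1) => v i < v j)).card < k
      · rw [Set.indicator_of_mem (show v ∈ B j from hjv), if_pos hjv]
      · rw [Set.indicator_of_notMem (show v ∉ B j from hjv), if_neg hjv]
    rw [this]
    exact_mod_cast Nat.cast_le.mpr hcomb
  -- integrate
  have hsum : (k : ℝ≥0∞) ≤ ∑ j : Fin (n + 1), μ (B j) := by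
    have h1 : ∫⁻ v, ∑ j : Fin (n + 1), (B j).indicator (fun _ => (1 : ℝ≥0∞)) v ∂μ
        = ∑ j : Fin (n + 1), μ (B j) := by
      rw [lintegral_finset_sum _ (fun j _ => measurable_const.indicator (hBm j))]
      exact Finset.sum_congr rfl fun j _ => lintegral_indicator_one (hBm j)
    calc (k : ℝ≥0∞) = ∫⁻ _, (k : ℝ≥0∞) ∂μ := by simp
      _ ≤ ∫⁻ v, ∑ j : Fin (n + 1), (B j).indicator (fun _ => (1 : ℝ≥0∞)) v ∂μ :=
          lintegral_mono hpt
      _ = ∑ j : Fin (n + 1), μ (B j) := h1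
  have hsum2 : (k : ℝ≥0∞) ≤ (n + 1 : ℕ) * μ (B (Fin.last n)) := by
    calc (k : ℝ≥0∞) ≤ ∑ j : Fin (n + 1), μ (B j) := hsum
      _ = ∑ _j : Fin (n + 1), μ (B (Fin.last n)) := Finset.sum_congr rfl fun j _ => hsame j
      _ = (n + 1 : ℕ) * μ (B (Fin.last n)) := by
          rw [Finset.sum_const, Finset.card_univ, Fintype.card_fin, nsmul_eq_mul]
  -- identify the event
  have hevent : {ω | V (Fin.last n) ω ≤ ηhat ω} = T ⁻¹' (B (Fin.last n)) := by
    ext ω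
    simp only [Set.mem_setOf_eq, Set.mem_preimage, hB, Set.mem_setOf_eq, hT]
    rw [hηhat]
    exact char_lemma hk1 hkn (fun i => V i ω)
  have hPev : P {ω | V (Fin.last n) ω ≤ ηhat ω} = μ (B (Fin.last n)) := by
    rw [hevent, hμ, Measure.map_apply hTm (hBm _)]
  rw [hPev]
  -- final arithmetic
  set p := μ (B (Fin.last n)) with hp
  have hpne : p ≠ ⊤ := measure_ne_top μ _
  have htr : (k : ℝ) ≤ (n + 1 : ℝ) * p.toReal := by
    have h1 := ENNReal.toReal_mono (ENNReal.mul_ne_top (ENNReal.natCast_ne_top _) hpne) hsum2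
    rw [ENNReal.toReal_natCast, ENNReal.toReal_mul, ENNReal.toReal_natCast] at h1
    push_cast at h1 ⊢
    linarith
  have hn1 : (0 : ℝ) < (n + 1 : ℝ) := by positivity
  nlinarith [hklb]
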